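/- Characterization of the constrained extremum governing the D2_k index and the supergravity attractor: Let p ∈ ℝ³ and H ∈ ℝ³ with H₁,H₂,H₃ > 0 and H₁+H₂+H₃ = 1. Define g : (0,∞)³ → ℝ by g(x) = (x₁x₂x₃)^{2/3}·( p₁/x₁ + p₂/x₂ + p₃/x₃ ) and set S = p₁/H₁ + p₂/H₂ + p₃/H₃. Then the three partial derivatives of g at H are all equal (i.e. H is a critical point of g restricted to the plane x₁+x₂+x₃ = 1) if and only if p_I = (S/3)·H_I·(2 − 3H_I) for I = 1,2,3; equivalently the ratios p_I / ( H_I(3H_I − 2) ) are equal for I = 1,2,3 whenever the denominators are nonzero. -/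

import Mathlib

open Real

lemma dlem (P A c a : ℝ) (hc : 0 < c) (ha : 0 < a) (f : ℝ → ℝ)
    (hf : ∀ x, 0 < x → f x = (x * c) ^ ((2:ℝ)/3) * (P / x + A)) :
    deriv f a = (a * c) ^ ((2:ℝ)/3) * (2/3 * (P/a + A) / a - P / a^2) := by
  have ha' : a ≠ 0 := ha.ne'
  have h1 : HasDerivAt (fun x : ℝ => x ^ ((2:ℝ)/3)) ((2:ℝ)/3 * a ^ ((2:ℝ)/3 - 1)) a :=
    Real.hasDerivAt_rpow_const (Or.inl ha')
  have h2 : HasDerivAt (fun x : ℝ => P / x + A) (P * (-(a^2)⁻¹)) a := by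
    simpa [div_eq_mul_inv] using ((hasDerivAt_inv ha').const_mul P).add_const A
  have hF : HasDerivAt (fun x : ℝ => (x ^ ((2:ℝ)/3) * (P / x + A)) * c ^ ((2:ℝ)/3))
      ((2/3 * a ^ ((2:ℝ)/3 - 1) * (P/a + A) + a ^ ((2:ℝ)/3) * (P * (-(a^2)⁻¹))) * c ^ ((2:ℝ)/3)) a :=
    (h1.mul h2).mul_const _
  have hev : f =ᶠ[nhds a] fun x => (x ^ ((2:ℝ)/3) * (P / x + A)) * c ^ ((2:ℝ)/3) := by
    filter_upwards [isOpen_Ioi.mem_nhds (show a ∈ Set.Ioi 0 from ha)] with x hx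
    rw [hf x hx, Real.mul_rpow hx.le hc.le]; ring
  rw [hev.deriv_eq, hF.deriv]
  have hma : a ^ ((2:ℝ)/3 - 1) = a ^ ((2:ℝ)/3) / a := by
    rw [Real.rpow_sub ha, Real.rpow_one]
  rw [Real.mul_rpow ha.le hc.le, hma]
  field_simp
  ring

theorem stmt15 (p H : Fin 3 → ℝ) (hH : ∀ i, 0 < H i) (hsum : H 0 + H 1 + H 2 = 1)
    (g : ℝ → ℝ → ℝ → ℝ)
    (hg : ∀ x1 x2 x3 : ℝ, 0 < x1 → 0 < x2 → 0 < x3 →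
      g x1 x2 x3 = (x1 * x2 * x3) ^ ((2 : ℝ) / 3) * (p 0 / x1 + p 1 / x2 + p 2 / x3))
    (S : ℝ) (hS : S = p 0 / H 0 + p 1 / H 1 + p 2 / H 2) :
    (deriv (fun x => g x (H 1) (H 2)) (H 0) = deriv (fun x => g (H 0) x (H 2)) (H 1) ∧
      deriv (fun x => g (H 0) x (H 2)) (H 1) = deriv (fun x => g (H 0) (H 1) x) (H 2))
    ↔ (∀ i, p i = S / 3 * H i * (2 - 3 * H i)) := by
  have h0 := hH 0; have h1 := hH 1; have h2 := hH 2
  have h0' := h0.ne'; have h1' := h1.ne'; have h2' := h2.ne'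
  set V : ℝ := H 0 * H 1 * H 2 with hV
  have hVpos : 0 < V := by positivity
  have hV23 : (0:ℝ) < V ^ ((2:ℝ)/3) := Real.rpow_pos_of_pos hVpos _
  -- the three derivatives
  have d0 : deriv (fun x => g x (H 1) (H 2)) (H 0)
      = V ^ ((2:ℝ)/3) * (2/3 * S / H 0 - p 0 / (H 0)^2) := by
    rw [dlem (p 0) (p 1 / H 1 + p 2 / H 2) (H 1 * H 2) (H 0) (by positivity) h0 _
      (fun x hx => by rw [hg x _ _ hx h1 h2, mul_assoc, add_assoc])]
    rw [show H 0 * (H 1 * H 2) = V from by rw [hV]; ring,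
      show p 0 / H 0 + (p 1 / H 1 + p 2 / H 2) = S from by rw [hS]; ring]
  have d1 : deriv (fun x => g (H 0) x (H 2)) (H 1)
      = V ^ ((2:ℝ)/3) * (2/3 * S / H 1 - p 1 / (H 1)^2) := by
    rw [dlem (p 1) (p 0 / H 0 + p 2 / H 2) (H 0 * H 2) (H 1) (by positivity) h1 _
      (fun x hx => by
        rw [hg _ x _ h0 hx h2,
          show H 0 * x * H 2 = x * (H 0 * H 2) from by ring,
          show p 0 / H 0 + p 1 / x + p 2 / H 2 = p 1 / x + (p 0 / H 0 + p 2 / H 2) from by ring])]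
    rw [show H 1 * (H 0 * H 2) = V from by rw [hV]; ring,
      show p 1 / H 1 + (p 0 / H 0 + p 2 / H 2) = S from by rw [hS]; ring]
  have d2 : deriv (fun x => g (H 0) (H 1) x) (H 2)
      = V ^ ((2:ℝ)/3) * (2/3 * S / H 2 - p 2 / (H 2)^2) := by
    rw [dlem (p 2) (p 0 / H 0 + p 1 / H 1) (H 0 * H 1) (H 2) (by positivity) h2 _
      (fun x hx => by
        rw [hg _ _ x h0 h1 hx,
          show H 0 * H 1 * x = x * (H 0 * H 1) from by ring,
          show p 0 / H 0 + p 1 / H 1 + p 2 / x = p 2 / x + (p 0 / H 0 + p 1 / H 1) from by ring])]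
    rw [show H 2 * (H 0 * H 1) = V from by rw [hV]; ring,
      show p 2 / H 2 + (p 0 / H 0 + p 1 / H 1) = S from by rw [hS]; ring]
  rw [d0, d1, d2]
  have hV23' := hV23.ne'
  constructor
  · rintro ⟨e01, e12⟩
    have t01 : 2/3 * S / H 0 - p 0 / (H 0)^2 = 2/3 * S / H 1 - p 1 / (H 1)^2 :=
      mul_left_cancel₀ hV23' e01
    have t12 : 2/3 * S / H 1 - p 1 / (H 1)^2 = 2/3 * S / H 2 - p 2 / (H 2)^2 :=
      mul_left_cancel₀ hV23' e12
    have expand : ∀ i : Fin 3, H i * (2/3 * S / H i - p i / (H i)^2)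
        = 2/3 * S - p i / H i := by
      intro i
      have hi' := (hH i).ne'
      field_simp
    have hsumt : H 0 * (2/3 * S / H 0 - p 0 / (H 0)^2)
        + H 1 * (2/3 * S / H 1 - p 1 / (H 1)^2)
        + H 2 * (2/3 * S / H 2 - p 2 / (H 2)^2) = S := by
      rw [expand 0, expand 1, expand 2]
      have := hS
      linarith
    have ht0 : 2/3 * S / H 0 - p 0 / (H 0)^2 = S := by
      have hh : (2/3 * S / H 0 - p 0 / (H 0)^2) * (H 0 + H 1 + H 2) = S := by
        linear_combination hsumt + (H 1 + H 2) * t01 + H 2 * t12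
      rwa [hsum, mul_one] at hh
    intro i
    have hti : 2/3 * S / H i - p i / (H i)^2 = S := by
      fin_cases i
      · exact ht0
      · exact t01 ▸ ht0
      · exact t12 ▸ (t01 ▸ ht0)
    have hi' := (hH i).ne'
    field_simp at hti
    have hz : 3 * H i * (p i - S / 3 * H i * (2 - 3 * H i)) = 0 := by
      linear_combination (-H i) * hti
    have h3 : (3 : ℝ) * H i ≠ 0 := by positivity
    have := (mul_eq_zero.mp hz).resolve_left h3
    linarith
  · intro hp
    have hts : ∀ i, 2/3 * S / H i - p i / (H i)^2 = S := by
      intro i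
      have hi' := (hH i).ne'
      rw [hp i]
      field_simp
      ring
    rw [hts 0, hts 1, hts 2]
    exact ⟨rfl, rfl⟩
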